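/- arXiv:1802.06973 — 4 statements merged into one kernel-verified Lean document; each statement's English description precedes it below -/
import Mathlib

section
/- Let G be a finite group acting on a finite set Ω, c a positive integer, and X a set of representatives of the conjugacy classes of elements of prime order in G. If Σ_{x ∈ X} |x^G| · (fix(x)/|Ω|)^c < 1, where fix(x) is the number of fixed points of x on Ω, then G has a base of size at most c on Ω. -/
open Finset

-- fixed point count is conjugation invariant
lemma fix_conj {G Ω : Type*} [Group G] [MulAction G Ω] {x g : G} (h : IsConj x g) :
    Nat.card {ω : Ω // x • ω = ω} = Nat.card {ω : Ω // g • ω = ω} := by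
  obtain ⟨k, hk⟩ := isConj_iff.mp h
  refine Nat.card_congr (Equiv.subtypeEquiv (MulAction.toPerm k) fun ω => ?_)
  have hg : g • (k • ω) = k • (x • ω) := by
    rw [← hk]; simp [mul_smul]
  show x • ω = ω ↔ g • (k • ω) = k • ω
  rw [hg, smul_left_cancel_iff]

-- any nontrivial element has a prime-order power
lemma exists_prime_power {G : Type*} [Group G] [Fintype G] {g : G} (hg : g ≠ 1) :
    ∃ k : ℕ, (∃ p : ℕ, p.Prime ∧ orderOf (g ^ k) = p) := by
  have hn : orderOf g ≠ 0 := (orderOf_pos g).ne'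
  have hn1 : orderOf g ≠ 1 := by simpa [orderOf_eq_one_iff] using hg
  set n := orderOf g with hndef
  have hp : n.minFac.Prime := Nat.minFac_prime hn1
  refine ⟨n / n.minFac, n.minFac, hp, ?_⟩
  have hdvd : n / n.minFac ∣ n := Nat.div_dvd_of_dvd (Nat.minFac_dvd n)
  rw [orderOf_pow, ← hndef, Nat.gcd_eq_right hdvd,
    Nat.div_div_self (Nat.minFac_dvd n) hn]

theorem stmt_3 {G Ω : Type*} [Group G] [Fintype G] [Fintype Ω] [Nonempty Ω]
    [MulAction G Ω] (c : ℕ) (hc : 0 < c) (X : Finset G)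
    (hX1 : ∀ x ∈ X, ∃ p : ℕ, p.Prime ∧ orderOf x = p)
    (hX2 : ∀ g : G, (∃ p : ℕ, p.Prime ∧ orderOf g = p) → ∃ x ∈ X, IsConj x g)
    (h : ∑ x ∈ X, (Nat.card {g : G // IsConj x g} : ℝ) *
        ((Nat.card {ω : Ω // x • ω = ω} : ℝ) / (Fintype.card Ω : ℝ)) ^ c < 1) :
    ∃ t : Fin c → Ω, ∀ g : G, (∀ i, g • t i = t i) → g = 1 := by
  classical
  set N := Fintype.card Ω with hN
  have hNpos : 0 < N := Fintype.card_pos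
  set f : G → ℕ := fun g => (Nat.card {ω : Ω // g • ω = ω}) ^ c with hf
  set P : Finset G := univ.filter (fun g => ∃ p : ℕ, p.Prime ∧ orderOf g = p) with hP
  set Bad : Finset (Fin c → Ω) :=
    univ.filter (fun t => ∃ g ∈ P, ∀ i, g • t i = t i) with hBad
  -- Step A
  have stepA : Bad.card ≤ ∑ g ∈ P, f g := by
    have hsub : Bad ⊆ P.biUnion (fun g => univ.filter (fun t => ∀ i, g • t i = t i)) := by
      intro t ht
      simp only [hBad, mem_filter, mem_univ, true_and] at ht
      obtain ⟨g, hgP, hgt⟩ := ht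
      exact Finset.mem_biUnion.mpr ⟨g, hgP, by simp [hgt]⟩
    refine (Finset.card_le_card hsub).trans ((Finset.card_biUnion_le).trans ?_)
    refine Finset.sum_le_sum fun g _ => ?_
    have : (univ.filter (fun t : Fin c → Ω => ∀ i, g • t i = t i)).card
        = Fintype.card {t : Fin c → Ω // ∀ i, g • t i = t i} := by
      rw [Fintype.card_subtype]
    rw [this, Fintype.card_congr (Equiv.subtypePiEquivPi (p := fun _ b => g • b = b)),
      Fintype.card_fun, hf]
    simp [Nat.card_eq_fintype_card]
  -- choice of representatives
  have hr : ∀ g ∈ P, ∃ x ∈ X, IsConj x g := by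
    intro g hg
    simp only [hP, mem_filter, mem_univ, true_and] at hg
    exact hX2 g hg
  set r : G → G := fun g => if hg : ∃ x ∈ X, IsConj x g then hg.choose else 1 with hrdef
  have hrX : ∀ g ∈ P, r g ∈ X ∧ IsConj (r g) g := by
    intro g hg
    have := hr g hg
    simp only [hrdef, dif_pos this]
    exact ⟨this.choose_spec.1, this.choose_spec.2⟩
  -- Step B
  have stepB : ∑ g ∈ P, f g ≤ ∑ x ∈ X, Nat.card {g : G // IsConj x g} * f x := by
    rw [← Finset.sum_fiberwise_of_maps_to (g := r) (fun g hg => (hrX g hg).1)]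
    refine Finset.sum_le_sum fun x hx => ?_
    have hconst : ∀ g ∈ P.filter (fun g => r g = x), f g = f x := by
      intro g hg
      obtain ⟨hgP, hgr⟩ := Finset.mem_filter.mp hg
      have := (hrX g hgP).2
      rw [hgr] at this
      exact congrArg (· ^ c) (fix_conj this).symm
    rw [Finset.sum_congr rfl hconst, Finset.sum_const, smul_eq_mul]
    apply Nat.mul_le_mul_right
    have : P.filter (fun g => r g = x) ⊆ univ.filter (fun g => IsConj x g) := by
      intro g hg
      obtain ⟨hgP, hgr⟩ := Finset.mem_filter.mp hg
      have := (hrX g hgP).2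
      rw [hgr] at this
      exact Finset.mem_filter.mpr ⟨Finset.mem_univ _, this⟩
    calc (P.filter (fun g => r g = x)).card ≤ (univ.filter (fun g => IsConj x g)).card :=
          Finset.card_le_card this
      _ = Nat.card {g : G // IsConj x g} := by
          rw [Nat.card_eq_fintype_card, Fintype.card_subtype]
  -- Step C
  have stepC : ∑ x ∈ X, Nat.card {g : G // IsConj x g} * f x < N ^ c := by
    have hNR : (0 : ℝ) < (N : ℝ) ^ c := by positivity
    have key : (∑ x ∈ X, (Nat.card {g : G // IsConj x g} * f x : ℕ) : ℝ) < (N : ℝ) ^ c := by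
      simp only [hf]
      push_cast
      calc ∑ x ∈ X, (Nat.card {g : G // IsConj x g} : ℝ) * (Nat.card {ω : Ω // x • ω = ω} : ℝ) ^ c
          = (∑ x ∈ X, (Nat.card {g : G // IsConj x g} : ℝ) *
            ((Nat.card {ω : Ω // x • ω = ω} : ℝ) / (N : ℝ)) ^ c) * (N : ℝ) ^ c := by
            rw [Finset.sum_mul]
            refine Finset.sum_congr rfl fun x _ => ?_
            rw [div_pow, mul_assoc, div_mul_cancel₀]
            exact hNR.ne'
        _ < 1 * (N : ℝ) ^ c := by
            exact mul_lt_mul_of_pos_right h hNR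
        _ = (N : ℝ) ^ c := one_mul _
    exact_mod_cast key
  -- Step D
  have hlt : Bad.card < Fintype.card (Fin c → Ω) := by
    rw [Fintype.card_fun, Fintype.card_fin]
    exact lt_of_le_of_lt (stepA.trans stepB) stepC
  have : Bad ≠ univ := by
    intro heq
    rw [heq, Finset.card_univ] at hlt
    exact lt_irrefl _ hlt
  obtain ⟨t, ht⟩ : ∃ t, t ∉ Bad := by
    by_contra hco
    push_neg at hco
    exact this (Finset.eq_univ_iff_forall.mpr hco)
  refine ⟨t, fun g hg => ?_⟩
  by_contra hg1
  obtain ⟨k, hk⟩ := exists_prime_power hg1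
  apply ht
  simp only [hBad, mem_filter, mem_univ, true_and]
  have hfix : ∀ m : ℕ, ∀ i, g ^ m • t i = t i := by
    intro m i
    induction m with
    | zero => simp
    | succ n ih => rw [pow_succ, mul_smul, hg i, ih]
  exact ⟨g ^ k, Finset.mem_filter.mpr ⟨Finset.mem_univ _, hk⟩, hfix k⟩
end

section
/- Let V be a 4-dimensional unitary space over F_{q^2} with q odd, with orthonormal basis v_1, v_2, v_3, v_4. Then any unitary transformation of V fixing each of the four 1-dimensional subspaces ⟨v_1⟩, ⟨v_2⟩, ⟨v_3⟩, ⟨v_1+v_2+v_3+v_4⟩ is a scalar transformation. -/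
theorem stmt_7 {F : Type*} [Field F] [Fintype F] (q : ℕ) (hq2 : Fintype.card F = q ^ 2)
    (hodd : Odd q) (hpp : ∃ p k : ℕ, p.Prime ∧ q = p ^ k)
    (f : (Fin 4 → F) ≃ₗ[F] (Fin 4 → F))
    (hunitary : ∀ u v : Fin 4 → F, ∑ i, f u i * (f v i) ^ q = ∑ i, u i * (v i) ^ q)
    (hfix : ∀ w ∈ ({Pi.single 0 1, Pi.single 1 1, Pi.single 2 1,
        Pi.single 0 1 + Pi.single 1 1 + Pi.single 2 1 + Pi.single 3 1} :
        Set (Fin 4 → F)),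
      Submodule.map f.toLinearMap (Submodule.span F {w}) = Submodule.span F {w}) :
    ∃ c : F, ∀ v, f v = c • v := by
  classical
  have hq0 : q ≠ 0 := by
    rcases hodd with ⟨k, hk⟩; omega
  set es : Fin 4 → (Fin 4 → F) := fun i => Pi.single i 1 with hes
  set e0 : Fin 4 → F := Pi.single 0 1 with he0
  set e1 : Fin 4 → F := Pi.single 1 1 with he1
  set e2 : Fin 4 → F := Pi.single 2 1 with he2
  set e3 : Fin 4 → F := Pi.single 3 1 with he3
  have hes0 : es 0 = e0 := rfl
  have hes1 : es 1 = e1 := rfl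
  have hes2 : es 2 = e2 := rfl
  have hes3 : es 3 = e3 := rfl
  have key : ∀ w : Fin 4 → F,
      Submodule.map f.toLinearMap (Submodule.span F {w}) = Submodule.span F {w} →
      ∃ a : F, f w = a • w := by
    intro w hw
    have : f w ∈ Submodule.span F ({w} : Set (Fin 4 → F)) := by
      rw [← hw]
      exact Submodule.mem_map_of_mem (Submodule.mem_span_singleton_self w)
    rcases Submodule.mem_span_singleton.mp this with ⟨a, ha⟩
    exact ⟨a, ha.symm⟩
  obtain ⟨a, ha⟩ := key e0 (hfix _ (by left; rfl))
  obtain ⟨b, hb⟩ := key e1 (hfix _ (by right; left; rfl))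
  obtain ⟨c, hc⟩ := key e2 (hfix _ (by right; right; left; rfl))
  obtain ⟨d, hd⟩ := key (e0 + e1 + e2 + e3) (hfix _ (by right; right; right; rfl))
  -- express f e3
  have hfe3 : f e3 = d • (e0 + e1 + e2 + e3) - a • e0 - b • e1 - c • e2 := by
    have h4 : (e0 + e1 + e2 + e3) - e0 - e1 - e2 = e3 := by abel
    calc f e3 = f ((e0 + e1 + e2 + e3) - e0 - e1 - e2) := by rw [h4]
      _ = f (e0 + e1 + e2 + e3) - f e0 - f e1 - f e2 := by
          simp only [map_sub]
      _ = d • (e0 + e1 + e2 + e3) - a • e0 - b • e1 - c • e2 := by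
          rw [hd, ha, hb, hc]
  have hne : ∀ (x : F) (i : Fin 4), f (es i) = x • es i → x ≠ 0 := by
    intro x i hx hx0
    have h0 : f (es i) = f 0 := by
      rw [hx, hx0, zero_smul, map_zero]
    have h1 := f.injective h0
    have := congrFun h1 i
    simp [hes, Pi.single_apply] at this
  have ha0 : a ≠ 0 := hne a 0 ha
  have hb0 : b ≠ 0 := hne b 1 hb
  have hc0 : c ≠ 0 := hne c 2 hc
  -- pairing ⟨e_i, e3⟩ = 0 gives a = d etc.
  have hpair : ∀ (i : Fin 4) (x : F), i ≠ 3 → f (es i) = x • es i →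
      x * ((f e3) i) ^ q = 0 := by
    intro i x hi3 hx
    have h := hunitary (es i) e3
    rw [hx] at h
    have hrhs : ∑ j, (es i) j * (e3 j) ^ q = 0 := by
      rw [hes, he3]
      rw [Finset.sum_eq_single i]
      · simp [Pi.single_apply, Ne.symm hi3, zero_pow hq0]
      · intro j _ hji
        simp [Pi.single_apply, hji]
      · simp
    rw [hrhs] at h
    rw [Finset.sum_eq_single i] at h
    · simpa [hes, Pi.single_apply] using h
    · intro j _ hji
      simp [hes, Pi.single_apply, hji]
    · simp
  have hval : ∀ i : Fin 4, (f e3) i =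
      (d • (e0 + e1 + e2 + e3) - a • e0 - b • e1 - c • e2) i := by
    intro i; rw [hfe3]
  have h03 : (f e3) 0 = d - a := by
    rw [hval 0]; simp [he0, he1, he2, he3, Pi.single_apply]
  have h13 : (f e3) 1 = d - b := by
    rw [hval 1]; simp [he0, he1, he2, he3, Pi.single_apply]
  have h23 : (f e3) 2 = d - c := by
    rw [hval 2]; simp [he0, he1, he2, he3, Pi.single_apply]
  have had : a = d := by
    have h := hpair 0 a (by decide) ha
    rw [h03] at h
    rcases mul_eq_zero.mp h with h' | h'
    · exact absurd h' ha0
    · have := pow_eq_zero_iff hq0 |>.mp h'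
      linear_combination -this
  have hbd : b = d := by
    have h := hpair 1 b (by decide) hb
    rw [h13] at h
    rcases mul_eq_zero.mp h with h' | h'
    · exact absurd h' hb0
    · have := pow_eq_zero_iff hq0 |>.mp h'
      linear_combination -this
  have hcd : c = d := by
    have h := hpair 2 c (by decide) hc
    rw [h23] at h
    rcases mul_eq_zero.mp h with h' | h'
    · exact absurd h' hc0
    · have := pow_eq_zero_iff hq0 |>.mp h'
      linear_combination -this
  have hfe3' : f e3 = d • e3 := by
    rw [hfe3, had, hbd, hcd]; module
  refine ⟨d, fun v => ?_⟩
  have hbasis : ∀ i : Fin 4, f (es i) = d • es i := by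
    intro i
    fin_cases i
    · show f (es 0) = d • es 0
      rw [hes0, ha, had]
    · show f (es 1) = d • es 1
      rw [hes1, hb, hbd]
    · show f (es 2) = d • es 2
      rw [hes2, hc, hcd]
    · show f (es 3) = d • es 3
      rw [hes3, hfe3']
  have hv : v = ∑ i, v i • es i := by
    funext j
    simp [hes, Pi.single_apply, Finset.sum_apply, mul_comm]
  calc f v = f (∑ i, v i • es i) := by rw [← hv]
    _ = ∑ i, v i • f (es i) := by
        simp [map_sum, map_smul]
    _ = ∑ i, v i • (d • es i) := by
        simp only [hbasis]
    _ = d • ∑ i, v i • es i := by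
        rw [Finset.smul_sum]
        congr 1; funext i
        rw [smul_comm]
    _ = d • v := by rw [← hv]
end

section
/- Let V be a 4-dimensional unitary space over F_{q^2} with q even, with orthonormal basis v_1, v_2, v_3, v_4. Then any unitary transformation of V fixing each of the five 1-dimensional subspaces ⟨v_1⟩, ⟨v_2⟩, ⟨v_3⟩, ⟨v_1+v_2+v_3⟩, ⟨v_2+v_3+v_4⟩ is a scalar transformation. -/
theorem stmt_8 {F : Type*} [Field F] [Fintype F] (q : ℕ) (hq2 : Fintype.card F = q ^ 2)
    (heven : ∃ k : ℕ, q = 2 ^ k)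
    (f : (Fin 4 → F) ≃ₗ[F] (Fin 4 → F))
    (hunitary : ∀ u v : Fin 4 → F, ∑ i, f u i * (f v i) ^ q = ∑ i, u i * (v i) ^ q)
    (hfix : ∀ w ∈ ({Pi.single 0 1, Pi.single 1 1, Pi.single 2 1,
        Pi.single 0 1 + Pi.single 1 1 + Pi.single 2 1,
        Pi.single 1 1 + Pi.single 2 1 + Pi.single 3 1} :
        Set (Fin 4 → F)),
      Submodule.map f.toLinearMap (Submodule.span F {w}) = Submodule.span F {w}) :
    ∃ c : F, ∀ v, f v = c • v := by
  obtain ⟨k, hk⟩ := heven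
  have hq0 : q ≠ 0 := by rw [hk]; positivity
  set e0 : Fin 4 → F := Pi.single 0 1 with he0
  set e1 : Fin 4 → F := Pi.single 1 1 with he1
  set e2 : Fin 4 → F := Pi.single 2 1 with he2
  set e3 : Fin 4 → F := Pi.single 3 1 with he3
  have key : ∀ w : Fin 4 → F,
      Submodule.map f.toLinearMap (Submodule.span F {w}) = Submodule.span F {w} →
      ∃ c : F, f w = c • w := by
    intro w hw
    have hmem : f w ∈ Submodule.span F ({w} : Set (Fin 4 → F)) := by
      rw [← hw]
      exact Submodule.mem_map_of_mem (Submodule.mem_span_singleton_self _)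
    obtain ⟨c, hc⟩ := Submodule.mem_span_singleton.mp hmem
    exact ⟨c, hc.symm⟩
  obtain ⟨a, ha⟩ := key e0 (hfix _ (by left; rfl))
  obtain ⟨b, hb⟩ := key e1 (hfix _ (by right; left; rfl))
  obtain ⟨c, hc⟩ := key e2 (hfix _ (by right; right; left; rfl))
  obtain ⟨d, hd⟩ := key (e0 + e1 + e2) (hfix _ (by right; right; right; left; rfl))
  obtain ⟨e, he⟩ := key (e1 + e2 + e3) (hfix _ (by right; right; right; right; rfl))
  have hd' : a • e0 + b • e1 + c • e2 = d • (e0 + e1 + e2) := by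
    rw [← ha, ← hb, ← hc, ← map_add, ← map_add]; exact hd
  have had : a = d := by
    have := congrFun hd' 0; simpa [he0, he1, he2] using this
  have hbd : b = d := by
    have := congrFun hd' 1; simpa [he0, he1, he2] using this
  have hcd : c = d := by
    have := congrFun hd' 2; simpa [he0, he1, he2] using this
  have hfe3 : f e3 = e • (e1 + e2 + e3) - b • e1 - c • e2 := by
    have he' : b • e1 + c • e2 + f e3 = e • (e1 + e2 + e3) := by
      rw [← hb, ← hc, ← map_add, ← map_add]; exact he
    rw [← he']; abel
  -- b ≠ 0 since f is injective
  have hb0 : b ≠ 0 := by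
    intro h
    have h1 : f e1 = f 0 := by rw [hb, h, zero_smul, map_zero]
    have h2 := f.injective h1
    have := congrFun h2 1
    simp [he1] at this
  -- unitarity: ⟨f e1, f e3⟩ = ⟨e1, e3⟩ = 0
  have huni := hunitary e1 e3
  have hrhs : ∑ i, e1 i * (e3 i) ^ q = 0 := by
    rw [Fin.sum_univ_four]
    simp [he1, he3, zero_pow hq0]
  have hlhs : ∑ i, f e1 i * (f e3 i) ^ q = b * (e - b) ^ q := by
    rw [Fin.sum_univ_four, hb, hfe3]
    simp [he1, he2, he3, Pi.single_apply, zero_pow hq0]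
  rw [hlhs, hrhs] at huni
  have heb : e = b := by
    rcases mul_eq_zero.mp huni with h | h
    · exact absurd h hb0
    · have := pow_eq_zero_iff hq0 |>.mp h
      linear_combination this
  have hf3 : f e3 = a • e3 := by
    rw [hfe3, heb, hbd, hcd, ← had]
    funext j
    fin_cases j <;> simp [he1, he2, he3, Pi.single_apply]
  refine ⟨a, fun v => ?_⟩
  have hv : v = v 0 • e0 + v 1 • e1 + v 2 • e2 + v 3 • e3 := by
    funext j; fin_cases j <;> simp [he0, he1, he2, he3, Pi.single_apply]
  calc f v = f (v 0 • e0 + v 1 • e1 + v 2 • e2 + v 3 • e3) := by rw [← hv]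
    _ = v 0 • f e0 + v 1 • f e1 + v 2 • f e2 + v 3 • f e3 := by
        simp [map_add, map_smul]
    _ = a • v := by
        rw [ha, hb, hc, hf3, hbd, ← had, hcd, ← had]
        funext j
        fin_cases j <;> simp [he0, he1, he2, he3, Pi.single_apply] <;> ring
end

section
/- Let X and Y be elements of SL_{n-1}(F) generating SL_{n-1}(F) (F a field, n ≥ 3), and let A = diag(X, -Tr(X)), B = diag(Y, -Tr(Y)) be the block-diagonal n×n trace-zero matrices extending X and Y. Then any g ∈ GL_n(F) satisfying g A g^{-1} = A and g B g^{-1} = B is of the form diag(λ I_{n-1}, μ) for scalars λ, μ ∈ F^×. -/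
open Matrix

section Aux

variable {F : Type*} [Field F] {m : ℕ}

private lemma sl_inv_coe (W : Matrix.SpecialLinearGroup (Fin m) F) :
    ((W⁻¹ : Matrix.SpecialLinearGroup (Fin m) F) : Matrix (Fin m) (Fin m) F) *
      (W : Matrix (Fin m) (Fin m) F) = 1 ∧
    (W : Matrix (Fin m) (Fin m) F) *
      ((W⁻¹ : Matrix.SpecialLinearGroup (Fin m) F) : Matrix (Fin m) (Fin m) F) = 1 := by
  constructor
  · rw [← Matrix.SpecialLinearGroup.coe_mul, inv_mul_cancel, Matrix.SpecialLinearGroup.coe_one]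
  · rw [← Matrix.SpecialLinearGroup.coe_mul, mul_inv_cancel, Matrix.SpecialLinearGroup.coe_one]

private lemma all_sl {X Y : Matrix.SpecialLinearGroup (Fin m) F}
    (hgen : Subgroup.closure {X, Y} = (⊤ : Subgroup (Matrix.SpecialLinearGroup (Fin m) F)))
    (S : Subgroup (Matrix.SpecialLinearGroup (Fin m) F)) (hX : X ∈ S) (hY : Y ∈ S) :
    ∀ W, W ∈ S := by
  have h : Subgroup.closure {X, Y} ≤ S := (Subgroup.closure_le S).mpr (by
    intro z hz
    rcases hz with hz | hz <;> simp_all)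
  rw [hgen] at h
  exact fun W => h (Subgroup.mem_top W)

private lemma aux_col (hm : 2 ≤ m) (q : Matrix (Fin m) Unit F)
    (h : ∀ W : Matrix.SpecialLinearGroup (Fin m) F,
      ∃ c : F, (W : Matrix (Fin m) (Fin m) F) * q = c • q) :
    q = 0 := by
  by_contra hq
  obtain ⟨j₀, u, hj₀⟩ : ∃ j₀ u, q j₀ u ≠ 0 := by
    by_contra hc; push_neg at hc
    exact hq (by ext j u; simpa using hc j u)
  obtain ⟨i, hi⟩ := Fintype.exists_ne_of_one_lt_card (by simpa using (show 1 < m by omega)) j₀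
  obtain ⟨c, hc⟩ := h ⟨Matrix.transvection i j₀ 1, Matrix.det_transvection_of_ne i j₀ hi 1⟩
  have hrow : ∀ k, q k u + (if i = k then q j₀ u else 0) = c * q k u := by
    intro k
    have h2 := congrFun (congrFun hc k) u
    simp only [Matrix.SpecialLinearGroup.coe_mk, Matrix.transvection, Matrix.add_mul,
      Matrix.one_mul, Matrix.add_apply, Matrix.smul_apply, Matrix.mul_apply,
      Matrix.single, Matrix.of_apply, ite_and, add_mul, ite_mul, one_mul, zero_mul,
      Finset.sum_add_distrib, Matrix.one_apply, Finset.mem_univ, if_true, smul_eq_mul] at h2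
    split_ifs at h2 ⊢ <;>
      simpa [Finset.sum_ite_eq, Finset.sum_ite_eq'] using h2
  have h1 := hrow j₀
  rw [if_neg hi, add_zero] at h1
  have hc1 : c = 1 := by
    have h3 : (c - 1) * q j₀ u = 0 := by linear_combination -h1
    rcases mul_eq_zero.mp h3 with h4 | h4
    · linear_combination h4
    · exact absurd h4 hj₀
  have h2 := hrow i
  rw [if_pos rfl, hc1, one_mul] at h2
  exact hj₀ (by linear_combination h2)

private lemma aux_row (hm : 2 ≤ m) (r : Matrix Unit (Fin m) F)
    (h : ∀ W : Matrix.SpecialLinearGroup (Fin m) F,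
      ∃ c : F, r * (W : Matrix (Fin m) (Fin m) F) = c • r) :
    r = 0 := by
  by_contra hr
  obtain ⟨u, i₀, hi₀⟩ : ∃ u i₀, r u i₀ ≠ 0 := by
    by_contra hc; push_neg at hc
    exact hr (by ext u i; simpa using hc u i)
  obtain ⟨j, hj⟩ := Fintype.exists_ne_of_one_lt_card (by simpa using (show 1 < m by omega)) i₀
  obtain ⟨c, hc⟩ := h ⟨Matrix.transvection i₀ j 1, Matrix.det_transvection_of_ne i₀ j (Ne.symm hj) 1⟩
  have hcol : ∀ l, r u l + (if j = l then r u i₀ else 0) = c * r u l := by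
    intro l
    have h2 := congrFun (congrFun hc u) l
    simp only [Matrix.SpecialLinearGroup.coe_mk, Matrix.transvection, Matrix.mul_add,
      Matrix.mul_one, Matrix.add_apply, Matrix.smul_apply, Matrix.mul_apply,
      Matrix.single, Matrix.of_apply, ite_and, mul_add, mul_ite, mul_one, mul_zero,
      Finset.sum_add_distrib, Matrix.one_apply, Finset.mem_univ, if_true, smul_eq_mul] at h2
    split_ifs at h2 ⊢ <;>
      simpa [Finset.sum_ite_eq, Finset.sum_ite_eq'] using h2
  have h1 := hcol i₀
  rw [if_neg hj, add_zero] at h1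
  have hc1 : c = 1 := by
    have h3 : (c - 1) * r u i₀ = 0 := by linear_combination -h1
    rcases mul_eq_zero.mp h3 with h4 | h4
    · linear_combination h4
    · exact absurd h4 hi₀
  have h2 := hcol j
  rw [if_pos rfl, hc1, one_mul] at h2
  exact hi₀ (by linear_combination h2)

private lemma aux_scalar (hm : 2 ≤ m) (P : Matrix (Fin m) (Fin m) F)
    (h : ∀ W : Matrix.SpecialLinearGroup (Fin m) F,
      (W : Matrix (Fin m) (Fin m) F) * P = P * (W : Matrix (Fin m) (Fin m) F)) :
    ∃ lam : F, P = lam • (1 : Matrix (Fin m) (Fin m) F) := by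
  have i₀ : Fin m := ⟨0, by omega⟩
  have key : ∀ i j : Fin m, i ≠ j → ∀ a b : Fin m,
      (if i = a then P j b else 0) = (if j = b then P a i else 0) := by
    intro i j hij a b
    have hc := h ⟨Matrix.transvection i j 1, Matrix.det_transvection_of_ne i j hij 1⟩
    simp only [Matrix.SpecialLinearGroup.coe_mk, Matrix.transvection, Matrix.add_mul,
      Matrix.mul_add, Matrix.one_mul, Matrix.mul_one] at hc
    have hc2 : Matrix.single i j (1 : F) * P = P * Matrix.single i j 1 :=
      add_left_cancel hc
    have h2 := congrFun (congrFun hc2 a) b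
    simpa [Matrix.mul_apply, Matrix.single, ite_and, ite_mul, mul_ite, one_mul, mul_one,
      zero_mul, mul_zero, Finset.sum_ite_eq, Finset.sum_ite_eq'] using h2
  refine ⟨P i₀ i₀, ?_⟩
  ext k l
  by_cases hkl : k = l
  · subst hkl
    by_cases hk : k = i₀
    · subst hk; simp [Matrix.one_apply]
    · have := key i₀ k (Ne.symm hk) i₀ k
      simp only [if_pos rfl] at this
      simp only [eq_self_iff_true, if_true] at this
      simp [Matrix.one_apply, this]
  · have := key l k (Ne.symm hkl) l l
    simp only [eq_self_iff_true, if_true, if_neg hkl] at this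
    simp [Matrix.one_apply, hkl, this]


end Aux

theorem stmt_10 {F : Type*} [Field F] (m : ℕ) (hm : 2 ≤ m)
    (X Y : Matrix.SpecialLinearGroup (Fin m) F)
    (hgen : Subgroup.closure {X, Y} = (⊤ : Subgroup (Matrix.SpecialLinearGroup (Fin m) F)))
    (A B : Matrix (Fin m ⊕ Unit) (Fin m ⊕ Unit) F)
    (hA : A = Matrix.fromBlocks (X : Matrix (Fin m) (Fin m) F) 0 0
        ((-Matrix.trace (X : Matrix (Fin m) (Fin m) F)) • (1 : Matrix Unit Unit F)))
    (hB : B = Matrix.fromBlocks (Y : Matrix (Fin m) (Fin m) F) 0 0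
        ((-Matrix.trace (Y : Matrix (Fin m) (Fin m) F)) • (1 : Matrix Unit Unit F)))
    (g : (Matrix (Fin m ⊕ Unit) (Fin m ⊕ Unit) F)ˣ)
    (hgA : (g : Matrix (Fin m ⊕ Unit) (Fin m ⊕ Unit) F) * A *
      ((g⁻¹ : (Matrix (Fin m ⊕ Unit) (Fin m ⊕ Unit) F)ˣ) : Matrix (Fin m ⊕ Unit) (Fin m ⊕ Unit) F) = A)
    (hgB : (g : Matrix (Fin m ⊕ Unit) (Fin m ⊕ Unit) F) * B *
      ((g⁻¹ : (Matrix (Fin m ⊕ Unit) (Fin m ⊕ Unit) F)ˣ) : Matrix (Fin m ⊕ Unit) (Fin m ⊕ Unit) F) = B) :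
    ∃ lam mu : Fˣ, (g : Matrix (Fin m ⊕ Unit) (Fin m ⊕ Unit) F) =
      Matrix.fromBlocks ((lam : F) • (1 : Matrix (Fin m) (Fin m) F)) 0 0
        ((mu : F) • (1 : Matrix Unit Unit F)) := by
  have hcA : (g : Matrix (Fin m ⊕ Unit) (Fin m ⊕ Unit) F) * A
      = A * (g : Matrix (Fin m ⊕ Unit) (Fin m ⊕ Unit) F) := by
    have h4 := congrArg (· * ((g : Matrix (Fin m ⊕ Unit) (Fin m ⊕ Unit) F))) hgA
    simp only [mul_assoc, Units.inv_mul, mul_one] at h4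
    exact h4
  have hcB : (g : Matrix (Fin m ⊕ Unit) (Fin m ⊕ Unit) F) * B
      = B * (g : Matrix (Fin m ⊕ Unit) (Fin m ⊕ Unit) F) := by
    have h4 := congrArg (· * ((g : Matrix (Fin m ⊕ Unit) (Fin m ⊕ Unit) F))) hgB
    simp only [mul_assoc, Units.inv_mul, mul_one] at h4
    exact h4
  set P := (g : Matrix (Fin m ⊕ Unit) (Fin m ⊕ Unit) F).toBlocks₁₁ with hP
  set q := (g : Matrix (Fin m ⊕ Unit) (Fin m ⊕ Unit) F).toBlocks₁₂ with hq
  set r := (g : Matrix (Fin m ⊕ Unit) (Fin m ⊕ Unit) F).toBlocks₂₁ with hr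
  set s := (g : Matrix (Fin m ⊕ Unit) (Fin m ⊕ Unit) F).toBlocks₂₂ with hs
  have hg : (g : Matrix (Fin m ⊕ Unit) (Fin m ⊕ Unit) F) = Matrix.fromBlocks P q r s :=
    (Matrix.fromBlocks_toBlocks _).symm
  have extract : ∀ (Z : Matrix.SpecialLinearGroup (Fin m) F),
      (g : Matrix (Fin m ⊕ Unit) (Fin m ⊕ Unit) F) *
        Matrix.fromBlocks (Z : Matrix (Fin m) (Fin m) F) 0 0
          ((-Matrix.trace (Z : Matrix (Fin m) (Fin m) F)) • (1 : Matrix Unit Unit F)) =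
      Matrix.fromBlocks (Z : Matrix (Fin m) (Fin m) F) 0 0
          ((-Matrix.trace (Z : Matrix (Fin m) (Fin m) F)) • (1 : Matrix Unit Unit F)) *
        (g : Matrix (Fin m ⊕ Unit) (Fin m ⊕ Unit) F) →
      P * (Z : Matrix (Fin m) (Fin m) F) = (Z : Matrix (Fin m) (Fin m) F) * P ∧
      (Z : Matrix (Fin m) (Fin m) F) * q = (-Matrix.trace (Z : Matrix (Fin m) (Fin m) F)) • q ∧
      r * (Z : Matrix (Fin m) (Fin m) F) = (-Matrix.trace (Z : Matrix (Fin m) (Fin m) F)) • r := by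
    intro Z hZ
    rw [hg, Matrix.fromBlocks_multiply, Matrix.fromBlocks_multiply] at hZ
    refine ⟨?_, ?_, ?_⟩
    · have := congrArg Matrix.toBlocks₁₁ hZ
      simpa using this
    · have := congrArg Matrix.toBlocks₁₂ hZ
      simp only [Matrix.toBlocks_fromBlocks₁₂, Matrix.mul_zero, Matrix.zero_mul,
        add_zero, zero_add, Matrix.mul_smul, Matrix.mul_one, Matrix.smul_mul,
        Matrix.one_mul] at this
      exact this.symm
    · have := congrArg Matrix.toBlocks₂₁ hZ
      simpa using this
  obtain ⟨hPX, hqX, hrX⟩ := extract X (by rw [← hA]; exact hcA)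
  obtain ⟨hPY, hqY, hrY⟩ := extract Y (by rw [← hB]; exact hcB)
  have hPcomm : ∀ W : Matrix.SpecialLinearGroup (Fin m) F,
      (W : Matrix (Fin m) (Fin m) F) * P = P * (W : Matrix (Fin m) (Fin m) F) := by
    set S : Subgroup (Matrix.SpecialLinearGroup (Fin m) F) :=
      { carrier := {W | (W : Matrix (Fin m) (Fin m) F) * P = P * (W : Matrix (Fin m) (Fin m) F)}
        one_mem' := by simp
        mul_mem' := by
          intro a b ha hb
          simp only [Set.mem_setOf_eq, Matrix.SpecialLinearGroup.coe_mul] at *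
          rw [mul_assoc, hb, ← mul_assoc, ha, mul_assoc]
        inv_mem' := by
          intro a ha
          simp only [Set.mem_setOf_eq] at *
          obtain ⟨h1, h2⟩ := sl_inv_coe a
          calc ((a⁻¹ : Matrix.SpecialLinearGroup (Fin m) F) : Matrix (Fin m) (Fin m) F) * P
              = ((a⁻¹ : Matrix.SpecialLinearGroup (Fin m) F) : Matrix (Fin m) (Fin m) F) * P *
                ((a : Matrix (Fin m) (Fin m) F) *
                  ((a⁻¹ : Matrix.SpecialLinearGroup (Fin m) F) : Matrix (Fin m) (Fin m) F)) := by
                rw [h2, mul_one]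
            _ = ((a⁻¹ : Matrix.SpecialLinearGroup (Fin m) F) : Matrix (Fin m) (Fin m) F) *
                ((a : Matrix (Fin m) (Fin m) F) * P) *
                ((a⁻¹ : Matrix.SpecialLinearGroup (Fin m) F) : Matrix (Fin m) (Fin m) F) := by
                rw [ha]; noncomm_ring
            _ = P * ((a⁻¹ : Matrix.SpecialLinearGroup (Fin m) F) : Matrix (Fin m) (Fin m) F) := by
                simp only [← mul_assoc]
                rw [h1, one_mul] }
    exact fun W => all_sl hgen S hPX.symm hPY.symm W
  obtain ⟨lam₀, hlam₀⟩ := aux_scalar hm P hPcomm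
  have hq0 : q = 0 := by
    apply aux_col hm q
    intro W
    set S : Subgroup (Matrix.SpecialLinearGroup (Fin m) F) :=
      { carrier := {W | ∃ c : F, (W : Matrix (Fin m) (Fin m) F) * q = c • q}
        one_mem' := ⟨1, by simp⟩
        mul_mem' := by
          rintro a b ⟨ca, ha⟩ ⟨cb, hb⟩
          refine ⟨ca * cb, ?_⟩
          simp only [Set.mem_setOf_eq, Matrix.SpecialLinearGroup.coe_mul]
          rw [Matrix.mul_assoc, hb, Matrix.mul_smul, ha, smul_smul, mul_comm cb ca]
        inv_mem' := by
          rintro a ⟨ca, ha⟩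
          by_cases hqz : q = 0
          · exact ⟨1, by simp [hqz]⟩
          obtain ⟨h1, h2⟩ := sl_inv_coe a
          have hca : ca ≠ 0 := by
            intro h0
            rw [h0, zero_smul] at ha
            apply hqz
            calc q = (((a⁻¹ : Matrix.SpecialLinearGroup (Fin m) F) : Matrix (Fin m) (Fin m) F) *
                  (a : Matrix (Fin m) (Fin m) F)) * q := by rw [h1, Matrix.one_mul]
              _ = 0 := by rw [Matrix.mul_assoc, ha, Matrix.mul_zero]
          refine ⟨ca⁻¹, ?_⟩
          have hkey : q = ca • (((a⁻¹ : Matrix.SpecialLinearGroup (Fin m) F) : Matrix (Fin m) (Fin m) F) * q) := by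
            calc q = (((a⁻¹ : Matrix.SpecialLinearGroup (Fin m) F) : Matrix (Fin m) (Fin m) F) *
                  (a : Matrix (Fin m) (Fin m) F)) * q := by rw [h1, Matrix.one_mul]
              _ = ((a⁻¹ : Matrix.SpecialLinearGroup (Fin m) F) : Matrix (Fin m) (Fin m) F) *
                  (ca • q) := by rw [Matrix.mul_assoc, ha]
              _ = ca • (((a⁻¹ : Matrix.SpecialLinearGroup (Fin m) F) : Matrix (Fin m) (Fin m) F) * q) := by
                  rw [Matrix.mul_smul]
          show ((a⁻¹ : Matrix.SpecialLinearGroup (Fin m) F) : Matrix (Fin m) (Fin m) F) * q = ca⁻¹ • q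
          conv_rhs => rw [hkey]
          rw [smul_smul, inv_mul_cancel₀ hca, one_smul] }
    exact all_sl hgen S ⟨_, hqX⟩ ⟨_, hqY⟩ W
  have hr0 : r = 0 := by
    apply aux_row hm r
    intro W
    set S : Subgroup (Matrix.SpecialLinearGroup (Fin m) F) :=
      { carrier := {W | ∃ c : F, r * (W : Matrix (Fin m) (Fin m) F) = c • r}
        one_mem' := ⟨1, by simp⟩
        mul_mem' := by
          rintro a b ⟨ca, ha⟩ ⟨cb, hb⟩
          refine ⟨ca * cb, ?_⟩
          simp only [Set.mem_setOf_eq, Matrix.SpecialLinearGroup.coe_mul]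
          rw [← Matrix.mul_assoc, ha, Matrix.smul_mul, hb, smul_smul]
        inv_mem' := by
          rintro a ⟨ca, ha⟩
          by_cases hrz : r = 0
          · exact ⟨1, by simp [hrz]⟩
          obtain ⟨h1, h2⟩ := sl_inv_coe a
          have hca : ca ≠ 0 := by
            intro h0
            rw [h0, zero_smul] at ha
            apply hrz
            calc r = r * ((a : Matrix (Fin m) (Fin m) F) *
                  ((a⁻¹ : Matrix.SpecialLinearGroup (Fin m) F) : Matrix (Fin m) (Fin m) F)) := by
                  rw [h2, Matrix.mul_one]
              _ = 0 := by rw [← Matrix.mul_assoc, ha, Matrix.zero_mul]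
          refine ⟨ca⁻¹, ?_⟩
          have hkey : r = ca • (r * ((a⁻¹ : Matrix.SpecialLinearGroup (Fin m) F) : Matrix (Fin m) (Fin m) F)) := by
            calc r = r * ((a : Matrix (Fin m) (Fin m) F) *
                  ((a⁻¹ : Matrix.SpecialLinearGroup (Fin m) F) : Matrix (Fin m) (Fin m) F)) := by
                  rw [h2, Matrix.mul_one]
              _ = (ca • r) * ((a⁻¹ : Matrix.SpecialLinearGroup (Fin m) F) : Matrix (Fin m) (Fin m) F) := by
                  rw [← Matrix.mul_assoc, ha]
              _ = ca • (r * ((a⁻¹ : Matrix.SpecialLinearGroup (Fin m) F) : Matrix (Fin m) (Fin m) F)) := by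
                  rw [Matrix.smul_mul]
          show r * ((a⁻¹ : Matrix.SpecialLinearGroup (Fin m) F) : Matrix (Fin m) (Fin m) F) = ca⁻¹ • r
          conv_rhs => rw [hkey]
          rw [smul_smul, inv_mul_cancel₀ hca, one_smul] }
    exact all_sl hgen S ⟨_, hrX⟩ ⟨_, hrY⟩ W
  set mu₀ : F := s () () with hmu₀
  have hgform : (g : Matrix (Fin m ⊕ Unit) (Fin m ⊕ Unit) F) =
      Matrix.fromBlocks (lam₀ • (1 : Matrix (Fin m) (Fin m) F)) 0 0 s := by
    rw [hg, hlam₀, hq0, hr0]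
  have hdet : IsUnit ((g : Matrix (Fin m ⊕ Unit) (Fin m ⊕ Unit) F).det) :=
    (Matrix.isUnit_iff_isUnit_det _).mp g.isUnit
  rw [hgform, Matrix.det_fromBlocks_zero₂₁] at hdet
  have hdets : s.det = mu₀ := by
    simp [Matrix.det_unique, hmu₀]
  rw [hdets, Matrix.det_smul, Matrix.det_one, mul_one, isUnit_iff_ne_zero] at hdet
  have hlamne : lam₀ ≠ 0 := by
    intro h0
    apply hdet
    rw [h0, zero_pow (by simp; omega), zero_mul]
  have hmune : mu₀ ≠ 0 := by
    intro h0
    apply hdet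
    rw [h0, mul_zero]
  have hs1 : s = mu₀ • (1 : Matrix Unit Unit F) := by
    ext a b
    cases a; cases b
    simp [hmu₀, Matrix.one_apply]
  exact ⟨Units.mk0 lam₀ hlamne, Units.mk0 mu₀ hmune, by rw [hgform, hs1]; rfl⟩
end
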